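/- Let y ∈ ℝ^N, let X be a real N×p matrix, let σ² > 0, let λ > 0, let d₁,…,d_K ∈ ℝ^p, and let F₁,…,F_L be symmetric positive semidefinite real p×p matrices with stacked matrix D̄. Then the (unnormalized) posterior kernel β ↦ exp(−‖y − Xβ‖₂²/(2σ²)) · exp(−λ(∑_{k=1}^K |dₖᵀβ| + ∑_{ℓ=1}^L √(βᵀ F_ℓ β))) is Lebesgue-integrable over ℝ^p if and only if the stacked (N+K+Lp)×p matrix obtained by stacking X on top of D̄ has rank p. -/

import Mathlib

open MeasureTheory Matrix Set


lemma aux_int_exp_abs {a : ℝ} (ha : 0 < a) :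
    Integrable (fun x : ℝ => Real.exp (-(a * |x|))) := by
  have hIoi : IntegrableOn (fun x : ℝ => Real.exp (-a * x)) (Ici 0) := by
    rw [integrableOn_Ici_iff_integrableOn_Ioi]
    exact exp_neg_integrableOn_Ioi 0 ha
  set g : ℝ → ℝ := (Ici (0:ℝ)).indicator (fun x => Real.exp (-a * x)) with hg
  have hgint : Integrable g := (integrable_indicator_iff measurableSet_Ici).2 hIoi
  have hgneg : Integrable (fun x => g (-x)) := hgint.comp_neg
  have hcont : Continuous fun x : ℝ => Real.exp (-(a * |x|)) := by
    continuity
  refine Integrable.mono' (hgint.add hgneg) hcont.aestronglyMeasurable ?_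
  filter_upwards with x
  rw [Real.norm_eq_abs, abs_of_nonneg (Real.exp_pos _).le]
  have hg0 : ∀ z : ℝ, 0 ≤ g z := fun z => Set.indicator_nonneg (fun y _ => (Real.exp_pos _).le) z
  rcases le_or_gt 0 x with hx | hx
  · have : g x = Real.exp (-(a * |x|)) := by
      rw [hg, Set.indicator_of_mem (mem_Ici.2 hx), abs_of_nonneg hx]; ring_nf
    calc Real.exp (-(a * |x|)) = g x := this.symm
      _ ≤ g x + g (-x) := le_add_of_nonneg_right (hg0 _)
  · have : g (-x) = Real.exp (-(a * |x|)) := by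
      rw [hg, Set.indicator_of_mem (mem_Ici.2 (by linarith)), abs_of_neg hx]; ring_nf
    calc Real.exp (-(a * |x|)) = g (-x) := this.symm
      _ ≤ g x + g (-x) := le_add_of_nonneg_left (hg0 _)


lemma aux_int_exp_norm {p : ℕ} (hp : 0 < p) {b : ℝ} (hb : 0 < b) :
    Integrable (fun β : Fin p → ℝ => Real.exp (-(b * ‖β‖))) := by
  have hbp : 0 < b / p := div_pos hb (Nat.cast_pos.2 hp)
  have hprod : Integrable (fun β : Fin p → ℝ => ∏ i, Real.exp (-(b / p * |β i|))) :=
    Integrable.fintype_prod (fun i => aux_int_exp_abs hbp)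
  have hcont : Continuous fun β : Fin p → ℝ => Real.exp (-(b * ‖β‖)) :=
    Real.continuous_exp.comp (by continuity)
  refine Integrable.mono' hprod hcont.aestronglyMeasurable ?_
  filter_upwards with β
  rw [Real.norm_eq_abs, abs_of_nonneg (Real.exp_pos _).le, ← Real.exp_sum]
  apply Real.exp_le_exp.2
  have h1 : ∑ i : Fin p, (-(b / p * |β i|)) = -(b/p * ∑ i, |β i|) := by
    simp [Finset.mul_sum]
  rw [h1, neg_le_neg_iff]
  have h2 : ∑ i : Fin p, |β i| ≤ p * ‖β‖ := by
    calc ∑ i : Fin p, |β i| ≤ ∑ _i : Fin p, ‖β‖ := by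
          apply Finset.sum_le_sum
          intro i _
          simpa [Real.norm_eq_abs] using norm_le_pi_norm β i
      _ = p * ‖β‖ := by simp [Finset.sum_const, nsmul_eq_mul]
  calc b / p * ∑ i, |β i| ≤ b / p * (p * ‖β‖) := by
        apply mul_le_mul_of_nonneg_left h2 hbp.le
    _ = b * ‖β‖ := by
        have : (p:ℝ) ≠ 0 := Nat.cast_ne_zero.2 hp.ne'
        field_simp


lemma aux_rank {m : Type*} [Fintype m] {p : ℕ} (M : Matrix m (Fin p) ℝ) :
    M.rank = p ↔ ∀ β, M *ᵥ β = 0 → β = 0 := by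
  rw [Matrix.rank]
  constructor
  · intro h β hβ
    have h2 := M.mulVecLin.finrank_range_add_finrank_ker
    rw [h, Module.finrank_fin_fun] at h2
    have hker : Module.finrank ℝ (LinearMap.ker M.mulVecLin) = 0 := by omega
    have : LinearMap.ker M.mulVecLin = ⊥ := Submodule.finrank_eq_zero.mp hker
    have hm : β ∈ LinearMap.ker M.mulVecLin := by
      simpa [Matrix.mulVecLin_apply] using hβ
    rw [this] at hm
    simpa using hm
  · intro h
    have : LinearMap.ker M.mulVecLin = ⊥ := by
      rw [LinearMap.ker_eq_bot']
      intro β hβ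
      exact h β (by simpa [Matrix.mulVecLin_apply] using hβ)
    have h2 := M.mulVecLin.finrank_range_add_finrank_ker
    rw [this, Module.finrank_fin_fun] at h2
    simpa using h2

lemma aux_psd_zero {p : ℕ} (F : Matrix (Fin p) (Fin p) ℝ) (hF : F.PosSemidef)
    (β : Fin p → ℝ) (h : β ⬝ᵥ F *ᵥ β = 0) : F *ᵥ β = 0 := by
  have := (hF.dotProduct_mulVec_zero_iff β).mp
  simp only [star_trivial] at this
  exact this h


lemma aux_lb {p : ℕ} {g : (Fin p → ℝ) → ℝ} (hc : Continuous g)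
    (hhom : ∀ (t : ℝ) β, g (t • β) = |t| * g β)
    (hpos : ∀ β, β ≠ 0 → 0 < g β) :
    ∃ c > 0, ∀ β, c * ‖β‖ ≤ g β := by
  have hg0 : g 0 = 0 := by
    have := hhom 0 0
    simpa using this
  rcases Nat.eq_zero_or_pos p with hp | hp
  · refine ⟨1, one_pos, fun β => ?_⟩
    have hβ : β = 0 := funext fun i => absurd hp (by subst hp; exact Fin.elim0 i)
    rw [hβ, hg0, norm_zero, mul_zero]
  · haveI : Nonempty (Fin p) := Fin.pos_iff_nonempty.mp hp
    have hsne : (Metric.sphere (0 : Fin p → ℝ) 1).Nonempty :=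
      NormedSpace.sphere_nonempty.mpr zero_le_one
    obtain ⟨x₀, hx₀, hmin'⟩ :=
      (isCompact_sphere (0 : Fin p → ℝ) 1).exists_isMinOn hsne hc.continuousOn
    have hmin : ∀ u ∈ Metric.sphere (0 : Fin p → ℝ) 1, g x₀ ≤ g u := fun u hu => hmin' hu
    have hx₀norm : ‖x₀‖ = 1 := by simpa using mem_sphere_zero_iff_norm.mp hx₀
    have hc0 : 0 < g x₀ := hpos x₀ (by intro h; rw [h] at hx₀norm; simp at hx₀norm)
    refine ⟨g x₀, hc0, fun β => ?_⟩
    rcases eq_or_ne β 0 with rfl | hβ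
    · rw [hg0, norm_zero, mul_zero]
    · have hnβ : ‖β‖ ≠ 0 := norm_ne_zero_iff.mpr hβ
      set u := ‖β‖⁻¹ • β with hu
      have hunorm : u ∈ Metric.sphere (0 : Fin p → ℝ) 1 := by
        rw [mem_sphere_zero_iff_norm, hu, norm_smul, norm_inv, norm_norm,
          inv_mul_cancel₀ hnβ]
      have hβu : β = ‖β‖ • u := by
        rw [hu, smul_smul, mul_inv_cancel₀ hnβ, one_smul]
      calc g x₀ * ‖β‖ ≤ g u * ‖β‖ := by
            apply mul_le_mul_of_nonneg_right (hmin u hunorm) (norm_nonneg _)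
        _ = g β := by
            have h3 : g β = ‖β‖ * g u := by
              conv_lhs => rw [hβu]
              rw [hhom, abs_of_nonneg (norm_nonneg β)]
            rw [h3]; ring


lemma aux_not_int {p : ℕ} {f : (Fin p → ℝ) → ℝ} (hc : Continuous f)
    (hpos : 0 < f 0) {v : Fin p → ℝ} (hv : v ≠ 0)
    (hinv : ∀ (t : ℝ) (β : Fin p → ℝ), f (β + t • v) = f β) :
    ¬ Integrable f volume := by
  intro hint
  set c : ℝ := f 0 / 2 with hc_def
  have hcpos : 0 < c := by positivity
  -- continuity at 0 gives a ball where f ≥ c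
  obtain ⟨δ, hδpos, hδ⟩ := Metric.continuousAt_iff.mp hc.continuousAt c hcpos
  set ε : ℝ := min δ (‖v‖ / 2) with hε_def
  have hvnorm : 0 < ‖v‖ := norm_pos_iff.mpr hv
  have hεpos : 0 < ε := lt_min hδpos (by positivity)
  have hball : ∀ w : Fin p → ℝ, ‖w‖ < ε → c ≤ f w := by
    intro w hw
    have h1 : dist w 0 < δ := by
      rw [dist_zero_right]; exact lt_of_lt_of_le hw (min_le_left _ _)
    have h2 := hδ h1
    rw [Real.dist_eq] at h2
    have := abs_lt.mp h2
    linarith [this.1]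
  set B : ℕ → Set (Fin p → ℝ) := fun n => Metric.ball ((n : ℝ) • v) ε with hB
  have hmeas : ∀ n, MeasurableSet (B n) := fun n => measurableSet_ball
  have hdisj : Pairwise (Function.onFun Disjoint B) := by
    intro m n hmn
    apply Metric.ball_disjoint_ball
    have hd : dist ((m : ℝ) • v) ((n : ℝ) • v) = |(m : ℝ) - n| * ‖v‖ := by
      rw [dist_eq_norm, ← sub_smul, norm_smul, Real.norm_eq_abs]
    have h1 : (1 : ℝ) ≤ |(m : ℝ) - n| := by
      rcases lt_or_gt_of_ne hmn with h | h
      · have hlt : (m : ℝ) < n := by exact_mod_cast h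
        rw [abs_sub_comm, abs_of_pos (sub_pos.mpr hlt)]
        have : (m : ℝ) + 1 ≤ n := by exact_mod_cast h
        linarith
      · have hlt : (n : ℝ) < m := by exact_mod_cast h
        rw [abs_of_pos (sub_pos.mpr hlt)]
        have : (n : ℝ) + 1 ≤ m := by exact_mod_cast h
        linarith
    have : ‖v‖ ≤ dist ((m : ℝ) • v) ((n : ℝ) • v) := by
      rw [hd]; nlinarith
    have hεv : ε + ε ≤ ‖v‖ := by
      have := min_le_right δ (‖v‖ / 2)
      have h2 : ε ≤ ‖v‖ / 2 := this
      linarith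
    linarith
  have hfB : ∀ n, ∀ x ∈ B n, c ≤ f x := by
    intro n x hx
    have h1 : ‖x - (n : ℝ) • v‖ < ε := by
      rw [← dist_eq_norm]; exact Metric.mem_ball.mp hx
    have h2 : f x = f (x - (n : ℝ) • v) := by
      have h3 := hinv (n : ℝ) (x - (n : ℝ) • v)
      rw [sub_add_cancel] at h3
      exact h3
    rw [h2]; exact hball _ h1
  have hlt := hint.lintegral_lt_top
  have hge : (⊤ : ENNReal) ≤ ∫⁻ x, ENNReal.ofReal (f x) ∂volume := by
    have hmf : Measurable fun x => ENNReal.ofReal (f x) := hc.measurable.ennreal_ofReal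
    calc (⊤ : ENNReal) = ∑' n : ℕ, ENNReal.ofReal c * volume (Metric.ball (0 : Fin p → ℝ) ε) := by
          rw [ENNReal.tsum_const_eq_top_of_ne_zero]
          apply mul_ne_zero
          · simpa using hcpos
          · exact (Metric.measure_ball_pos volume 0 hεpos).ne'
      _ = ∑' n : ℕ, ENNReal.ofReal c * volume (B n) := by
          congr 1; funext n
          rw [hB]
          congr 1
          exact (Measure.addHaar_ball_center volume _ _).symm
      _ ≤ ∑' n : ℕ, ∫⁻ x in B n, ENNReal.ofReal (f x) := by
          apply ENNReal.tsum_le_tsum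
          intro n
          calc ENNReal.ofReal c * volume (B n) = ∫⁻ _ in B n, ENNReal.ofReal c := by
                rw [setLIntegral_const]
            _ ≤ ∫⁻ x in B n, ENNReal.ofReal (f x) := by
                apply setLIntegral_mono hmf
                intro x hx
                exact ENNReal.ofReal_le_ofReal (hfB n x hx)
      _ = ∫⁻ x in ⋃ n, B n, ENNReal.ofReal (f x) := (lintegral_iUnion hmeas hdisj _).symm
      _ ≤ ∫⁻ x, ENNReal.ofReal (f x) ∂volume := setLIntegral_le_lintegral _ _
  rw [top_le_iff] at hge
  rw [hge] at hlt
  exact (lt_irrefl _ hlt)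


section Main
variable {N p K L : ℕ} (y : Fin N → ℝ) (X : Matrix (Fin N) (Fin p) ℝ)
    (lam : ℝ) (d : Fin K → (Fin p → ℝ)) (F : Fin L → Matrix (Fin p) (Fin p) ℝ)

lemma aux_cont_dot (v : Fin p → ℝ) : Continuous fun β : Fin p → ℝ => v ⬝ᵥ β := by
  unfold dotProduct
  exact continuous_finset_sum _ fun i _ => continuous_const.mul (continuous_apply i)

lemma aux_cont_quad (A : Matrix (Fin p) (Fin p) ℝ) :
    Continuous fun β : Fin p → ℝ => β ⬝ᵥ A *ᵥ β := by
  have : (fun β : Fin p → ℝ => β ⬝ᵥ A *ᵥ β)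
      = fun β => ∑ i, β i * ((fun j => A i j) ⬝ᵥ β) := rfl
  rw [this]
  exact continuous_finset_sum _ fun i _ =>
    (continuous_apply i).mul (aux_cont_dot (fun j => A i j))

lemma aux_cont_f (σ2 : ℝ) : Continuous (fun β : Fin p → ℝ =>
    Real.exp (-(∑ n, (y n - (X *ᵥ β) n) ^ 2) / (2 * σ2)) *
      Real.exp (-(lam * ((∑ k, |d k ⬝ᵥ β|) +
        ∑ ℓ, Real.sqrt (β ⬝ᵥ (F ℓ) *ᵥ β))))) := by
  apply Continuous.mul
  · apply Real.continuous_exp.comp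
    apply Continuous.div_const
    apply Continuous.neg
    apply continuous_finset_sum _ fun n _ => ?_
    have : (fun β : Fin p → ℝ => (y n - (X *ᵥ β) n) ^ 2)
        = fun β => (y n - (fun j => X n j) ⬝ᵥ β) ^ 2 := rfl
    rw [this]
    exact ((continuous_const.sub (aux_cont_dot _)).pow 2)
  · apply Real.continuous_exp.comp
    apply Continuous.neg
    apply continuous_const.mul
    apply Continuous.add
    · exact continuous_finset_sum _ fun k _ => (aux_cont_dot (d k)).abs
    · exact continuous_finset_sum _ fun ℓ _ =>
        Real.continuous_sqrt.comp (aux_cont_quad (F ℓ))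

end Main


lemma aux_sq {σ2 : ℝ} (hσ2 : 0 < σ2) (y t : ℝ) :
    |t| - σ2 - y ^ 2 / (2 * σ2) ≤ (y - t) ^ 2 / (2 * σ2) := by
  have h2 : 0 < 2 * σ2 := by linarith
  have key : (|t| - σ2 - y ^ 2 / (2 * σ2)) * (2 * σ2) ≤ (y - t) ^ 2 := by
    have hy : y ^ 2 / (2 * σ2) * (2 * σ2) = y ^ 2 := by field_simp
    nlinarith [sq_nonneg (y - t), sq_nonneg (t - 2 * y), sq_nonneg (|t| - 2 * σ2), sq_abs t]
  calc |t| - σ2 - y ^ 2 / (2 * σ2)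
      = (|t| - σ2 - y ^ 2 / (2 * σ2)) * (2 * σ2) / (2 * σ2) := by field_simp
    _ ≤ (y - t) ^ 2 / (2 * σ2) := by gcongr
lemma aux_bwd {N p K L : ℕ} (y : Fin N → ℝ) (X : Matrix (Fin N) (Fin p) ℝ)
    (σ2 : ℝ) (hσ2 : 0 < σ2) (lam : ℝ) (hlam : 0 < lam)
    (d : Fin K → (Fin p → ℝ)) (F : Fin L → Matrix (Fin p) (Fin p) ℝ)
    (hFpsd : ∀ ℓ, (F ℓ).PosSemidef) (hp : 0 < p)
    (hinj : ∀ β : Fin p → ℝ,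
      (X *ᵥ β = 0 ∧ (∀ k, d k ⬝ᵥ β = 0) ∧ ∀ ℓ, F ℓ *ᵥ β = 0) → β = 0) :
    Integrable (fun β : Fin p → ℝ =>
        Real.exp (-(∑ n, (y n - (X *ᵥ β) n) ^ 2) / (2 * σ2)) *
          Real.exp (-(lam * ((∑ k, |d k ⬝ᵥ β|) +
            ∑ ℓ, Real.sqrt (β ⬝ᵥ (F ℓ) *ᵥ β))))) volume := by
  have hFnn : ∀ ℓ (β : Fin p → ℝ), 0 ≤ β ⬝ᵥ F ℓ *ᵥ β := by
    intro ℓ β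
    have := (hFpsd ℓ).dotProduct_mulVec_nonneg β
    simpa using this
  set g : (Fin p → ℝ) → ℝ := fun β =>
    (∑ n, |X n ⬝ᵥ β|) + ((∑ k, |d k ⬝ᵥ β|) + ∑ ℓ, Real.sqrt (β ⬝ᵥ F ℓ *ᵥ β)) with hg
  have hgcont : Continuous g := by
    apply Continuous.add
    · exact continuous_finset_sum _ fun n _ => (aux_cont_dot (X n)).abs
    · apply Continuous.add
      · exact continuous_finset_sum _ fun k _ => (aux_cont_dot (d k)).abs
      · exact continuous_finset_sum _ fun ℓ _ =>
          Real.continuous_sqrt.comp (aux_cont_quad (F ℓ))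
  have hdsmul : ∀ (v : Fin p → ℝ) (t : ℝ) (β : Fin p → ℝ), v ⬝ᵥ (t • β) = t * (v ⬝ᵥ β) := by
    intro v t β
    rw [dotProduct_smul]
    rfl
  have hghom : ∀ (t : ℝ) (β : Fin p → ℝ), g (t • β) = |t| * g β := by
    intro t β
    rw [hg]
    simp only
    have h1 : ∀ v : Fin p → ℝ, |v ⬝ᵥ (t • β)| = |t| * |v ⬝ᵥ β| := by
      intro v; rw [hdsmul, abs_mul]
    have h2 : ∀ ℓ, Real.sqrt ((t • β) ⬝ᵥ F ℓ *ᵥ (t • β)) = |t| * Real.sqrt (β ⬝ᵥ F ℓ *ᵥ β) := by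
      intro ℓ
      have : (t • β) ⬝ᵥ F ℓ *ᵥ (t • β) = t ^ 2 * (β ⬝ᵥ F ℓ *ᵥ β) := by
        rw [Matrix.mulVec_smul, dotProduct_smul, smul_dotProduct]
        simp [smul_eq_mul]; ring
      rw [this, Real.sqrt_mul (sq_nonneg t), Real.sqrt_sq_eq_abs]
    simp only [h1, h2, ← Finset.mul_sum]
    ring
  have hgpos : ∀ β : Fin p → ℝ, β ≠ 0 → 0 < g β := by
    intro β hβ
    by_contra hle
    push_neg at hle
    have hterm1 : ∀ n, (0:ℝ) ≤ |X n ⬝ᵥ β| := fun n => abs_nonneg _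
    have hnn : 0 ≤ g β := by
      rw [hg]
      have : ∀ ℓ ∈ Finset.univ, (0:ℝ) ≤ Real.sqrt (β ⬝ᵥ F ℓ *ᵥ β) :=
        fun ℓ _ => Real.sqrt_nonneg _
      positivity
    have hzero : g β = 0 := le_antisymm hle hnn
    rw [hg] at hzero
    simp only at hzero
    have hs1 : (∑ n, |X n ⬝ᵥ β|) = 0 ∧ ((∑ k, |d k ⬝ᵥ β|) + ∑ ℓ, Real.sqrt (β ⬝ᵥ F ℓ *ᵥ β)) = 0 := by
      constructor <;> nlinarith [Finset.sum_nonneg (fun n (_ : n ∈ Finset.univ) => abs_nonneg (X n ⬝ᵥ β)),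
        Finset.sum_nonneg (fun k (_ : k ∈ Finset.univ) => abs_nonneg (d k ⬝ᵥ β)),
        Finset.sum_nonneg (fun ℓ (_ : ℓ ∈ Finset.univ) => Real.sqrt_nonneg (β ⬝ᵥ F ℓ *ᵥ β))]
    have hs2 : (∑ k, |d k ⬝ᵥ β|) = 0 ∧ (∑ ℓ, Real.sqrt (β ⬝ᵥ F ℓ *ᵥ β)) = 0 := by
      constructor <;> nlinarith [hs1.2,
        Finset.sum_nonneg (fun k (_ : k ∈ Finset.univ) => abs_nonneg (d k ⬝ᵥ β)),
        Finset.sum_nonneg (fun ℓ (_ : ℓ ∈ Finset.univ) => Real.sqrt_nonneg (β ⬝ᵥ F ℓ *ᵥ β))]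
    have hX0 : X *ᵥ β = 0 := by
      funext n
      have := (Finset.sum_eq_zero_iff_of_nonneg (fun n _ => abs_nonneg (X n ⬝ᵥ β))).mp hs1.1 n
        (Finset.mem_univ n)
      simpa [Matrix.mulVec] using abs_eq_zero.mp this
    have hd0 : ∀ k, d k ⬝ᵥ β = 0 := by
      intro k
      have := (Finset.sum_eq_zero_iff_of_nonneg (fun k _ => abs_nonneg (d k ⬝ᵥ β))).mp hs2.1 k
        (Finset.mem_univ k)
      exact abs_eq_zero.mp this
    have hF0 : ∀ ℓ, F ℓ *ᵥ β = 0 := by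
      intro ℓ
      have hsqrt := (Finset.sum_eq_zero_iff_of_nonneg
        (fun ℓ _ => Real.sqrt_nonneg (β ⬝ᵥ F ℓ *ᵥ β))).mp hs2.2 ℓ (Finset.mem_univ ℓ)
      have hq : β ⬝ᵥ F ℓ *ᵥ β = 0 := by
        have := Real.sqrt_eq_zero (hFnn ℓ β) |>.mp hsqrt
        exact this
      exact aux_psd_zero (F ℓ) (hFpsd ℓ) β hq
    exact hβ (hinj β ⟨hX0, hd0, hF0⟩)
  obtain ⟨c, hcpos, hc⟩ := aux_lb hgcont hghom hgpos
  set m : ℝ := min 1 lam with hm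
  have hmpos : 0 < m := lt_min one_pos hlam
  set C : ℝ := Real.exp ((N : ℝ) * σ2 + (∑ n, y n ^ 2) / (2 * σ2)) with hC
  have hbound : ∀ β : Fin p → ℝ,
      ‖Real.exp (-(∑ n, (y n - (X *ᵥ β) n) ^ 2) / (2 * σ2)) *
          Real.exp (-(lam * ((∑ k, |d k ⬝ᵥ β|) +
            ∑ ℓ, Real.sqrt (β ⬝ᵥ (F ℓ) *ᵥ β))))‖ ≤ C * Real.exp (-(m * c * ‖β‖)) := by
    intro β
    rw [Real.norm_eq_abs, abs_of_nonneg (by positivity), ← Real.exp_add, hC, ← Real.exp_add]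
    apply Real.exp_le_exp.2
    have hA : (∑ n, |X n ⬝ᵥ β|) - ((N : ℝ) * σ2 + (∑ n, y n ^ 2) / (2 * σ2))
        ≤ (∑ n, (y n - (X *ᵥ β) n) ^ 2) / (2 * σ2) := by
      have : ∀ n, |X n ⬝ᵥ β| - σ2 - y n ^ 2 / (2 * σ2) ≤ (y n - (X *ᵥ β) n) ^ 2 / (2 * σ2) := by
        intro n
        have := aux_sq hσ2 (y n) ((X *ᵥ β) n)
        simpa [Matrix.mulVec] using this
      calc (∑ n, |X n ⬝ᵥ β|) - ((N : ℝ) * σ2 + (∑ n, y n ^ 2) / (2 * σ2))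
          = ∑ n, (|X n ⬝ᵥ β| - σ2 - y n ^ 2 / (2 * σ2)) := by
            rw [Finset.sum_sub_distrib, Finset.sum_sub_distrib, ← Finset.sum_div]
            simp [Finset.sum_const, Finset.card_univ]
            ring
        _ ≤ ∑ n, (y n - (X *ᵥ β) n) ^ 2 / (2 * σ2) := Finset.sum_le_sum fun n _ => this n
        _ = (∑ n, (y n - (X *ᵥ β) n) ^ 2) / (2 * σ2) := by rw [Finset.sum_div]
    have hS : m * g β ≤ (∑ n, |X n ⬝ᵥ β|) +
        lam * ((∑ k, |d k ⬝ᵥ β|) + ∑ ℓ, Real.sqrt (β ⬝ᵥ (F ℓ) *ᵥ β)) := by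
      have hgβ : g β = (∑ n, |X n ⬝ᵥ β|) +
          ((∑ k, |d k ⬝ᵥ β|) + ∑ ℓ, Real.sqrt (β ⬝ᵥ F ℓ *ᵥ β)) := rfl
      rw [hgβ]
      have hm1 : m ≤ 1 := min_le_left _ _
      have hm2 : m ≤ lam := min_le_right _ _
      have ht1 : 0 ≤ ∑ n, |X n ⬝ᵥ β| :=
        Finset.sum_nonneg fun n _ => abs_nonneg _
      have ht2 : 0 ≤ (∑ k, |d k ⬝ᵥ β|) + ∑ ℓ, Real.sqrt (β ⬝ᵥ (F ℓ) *ᵥ β) := by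
        have := Finset.sum_nonneg fun k (_ : k ∈ Finset.univ) => abs_nonneg (d k ⬝ᵥ β)
        have := Finset.sum_nonneg fun ℓ (_ : ℓ ∈ Finset.univ) => Real.sqrt_nonneg (β ⬝ᵥ F ℓ *ᵥ β)
        linarith
      nlinarith [mul_le_mul_of_nonneg_right hm1 ht1, mul_le_mul_of_nonneg_right hm2 ht2]
    have hm3 : m * (c * ‖β‖) ≤ m * g β :=
      mul_le_mul_of_nonneg_left (hc β) hmpos.le
    rw [neg_div]
    have hgoal : -((∑ n, (y n - (X *ᵥ β) n) ^ 2) / (2 * σ2)) +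
        -(lam * ((∑ k, |d k ⬝ᵥ β|) + ∑ ℓ, Real.sqrt (β ⬝ᵥ (F ℓ) *ᵥ β)))
        ≤ ((N : ℝ) * σ2 + (∑ n, y n ^ 2) / (2 * σ2)) + -(m * c * ‖β‖) := by
      nlinarith [hA, hS, hm3]
    linarith [hgoal]
  refine Integrable.mono' ((aux_int_exp_norm hp (mul_pos hmpos hcpos)).const_mul C)
    (aux_cont_f y X lam d F σ2).aestronglyMeasurable ?_
  filter_upwards with β
  exact hbound β


/-- Bayesian linear regression with a structured sparse prior: the posterior kernel is
integrable over ℝ^p iff the augmented design matrix (X stacked on top of D̄) has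
full column rank `p`. -/
theorem linear_posterior_proper_iff_augmented_full_rank
    (N p K L : ℕ) (y : Fin N → ℝ) (X : Matrix (Fin N) (Fin p) ℝ)
    (σ2 : ℝ) (hσ2 : 0 < σ2) (lam : ℝ) (hlam : 0 < lam)
    (d : Fin K → (Fin p → ℝ))
    (F : Fin L → Matrix (Fin p) (Fin p) ℝ)
    (hFsymm : ∀ ℓ, (F ℓ).IsSymm)
    (hFpsd : ∀ ℓ, (F ℓ).PosSemidef) :
    Integrable (fun β : Fin p → ℝ =>
        Real.exp (-(∑ n, (y n - (X *ᵥ β) n) ^ 2) / (2 * σ2)) *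
          Real.exp (-(lam * ((∑ k, |d k ⬝ᵥ β|) +
            ∑ ℓ, Real.sqrt (β ⬝ᵥ (F ℓ) *ᵥ β))))) volume ↔
      (Matrix.of (Sum.elim (fun n => X n)
          (Sum.elim d (fun li : Fin L × Fin p => F li.1 li.2)))).rank = p := by
  set M : Matrix (Fin N ⊕ (Fin K ⊕ Fin L × Fin p)) (Fin p) ℝ :=
    Matrix.of (Sum.elim (fun n => X n)
      (Sum.elim d (fun li : Fin L × Fin p => F li.1 li.2))) with hM
  have hMv : ∀ β : Fin p → ℝ, M *ᵥ β = 0 ↔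
      (X *ᵥ β = 0 ∧ (∀ k, d k ⬝ᵥ β = 0) ∧ ∀ ℓ, F ℓ *ᵥ β = 0) := by
    intro β
    constructor
    · intro h
      refine ⟨funext fun n => ?_, fun k => ?_, fun ℓ => funext fun i => ?_⟩
      · exact congrFun h (Sum.inl n)
      · exact congrFun h (Sum.inr (Sum.inl k))
      · exact congrFun h (Sum.inr (Sum.inr (ℓ, i)))
    · rintro ⟨h1, h2, h3⟩
      funext i
      rcases i with n | i
      · exact congrFun h1 n
      · rcases i with k | ⟨ℓ, i⟩
        · exact h2 k
        · exact congrFun (h3 ℓ) i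
  rw [aux_rank M]
  constructor
  · intro hint β₀ hMβ₀
    by_contra hβ₀
    obtain ⟨hX0, hd0, hF0⟩ := (hMv β₀).mp hMβ₀
    refine aux_not_int (aux_cont_f y X lam d F σ2) ?_ hβ₀ ?_ hint
    · positivity
    · intro t β
      have hXadd : X *ᵥ (β + t • β₀) = X *ᵥ β := by
        rw [Matrix.mulVec_add, Matrix.mulVec_smul, hX0, smul_zero, add_zero]
      have hdadd : ∀ k, d k ⬝ᵥ (β + t • β₀) = d k ⬝ᵥ β := by
        intro k
        rw [dotProduct_add, dotProduct_smul, hd0, smul_zero, add_zero]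
      have hquad : ∀ ℓ, (β + t • β₀) ⬝ᵥ F ℓ *ᵥ (β + t • β₀) = β ⬝ᵥ F ℓ *ᵥ β := by
        intro ℓ
        have hmv : F ℓ *ᵥ (β + t • β₀) = F ℓ *ᵥ β := by
          rw [Matrix.mulVec_add, Matrix.mulVec_smul, hF0, smul_zero, add_zero]
        have hcross : β₀ ⬝ᵥ F ℓ *ᵥ β = 0 := by
          rw [Matrix.dotProduct_mulVec, ← (hFsymm ℓ).eq, Matrix.vecMul_transpose, hF0,
            zero_dotProduct]
        rw [hmv, add_dotProduct, smul_dotProduct, hcross, smul_zero, add_zero]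
      simp only [hXadd, hdadd, hquad]
  · intro hinj
    rcases Nat.eq_zero_or_pos p with hp0 | hp
    · subst hp0
      haveI : IsFiniteMeasure (volume : Measure (Fin 0 → ℝ)) := by
        constructor
        rw [volume_pi, Measure.pi_univ]
        simp
      have hconst : (fun β : Fin 0 → ℝ =>
          Real.exp (-(∑ n, (y n - (X *ᵥ β) n) ^ 2) / (2 * σ2)) *
            Real.exp (-(lam * ((∑ k, |d k ⬝ᵥ β|) +
              ∑ ℓ, Real.sqrt (β ⬝ᵥ (F ℓ) *ᵥ β)))))
          = fun _ : Fin 0 → ℝ =>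
            Real.exp (-(∑ n, (y n - (X *ᵥ 0) n) ^ 2) / (2 * σ2)) *
              Real.exp (-(lam * ((∑ k, |d k ⬝ᵥ (0 : Fin 0 → ℝ)|) +
                ∑ ℓ, Real.sqrt ((0 : Fin 0 → ℝ) ⬝ᵥ (F ℓ) *ᵥ 0)))) := by
        funext β
        rw [Subsingleton.elim β 0]
      rw [hconst]
      exact integrable_const _
    · exact aux_bwd y X σ2 hσ2 lam hlam d F hFpsd hp
        (fun β h => hinj β ((hMv β).mpr h))
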